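/- Let a(v,η) = 1 + |v|² + |η|² + |ξ|² + |v∧η|² + |v∧ξ|² on ℝ³×ℝ³ with parameter ξ ∈ ℝ³. Then for every k ∈ ℝ and all multi-indices α, β, |∂_v^α ∂_η^β (a^k)| ≤ C_{α,β,k} a^k, with constants independent of ξ. -/

import Mathlib

open Real ContDiff

noncomputable def cross (v w : EuclideanSpace ℝ (Fin 3)) : EuclideanSpace ℝ (Fin 3) :=
  (WithLp.equiv 2 (Fin 3 → ℝ)).symm
    ![v 1 * w 2 - v 2 * w 1, v 2 * w 0 - v 0 * w 2, v 0 * w 1 - v 1 * w 0]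

local notation "F3" => EuclideanSpace ℝ (Fin 3)

lemma eucl_normsq (x : F3) : ‖x‖^2 = x 0^2 + x 1^2 + x 2^2 := by
  rw [EuclideanSpace.norm_eq, Real.sq_sqrt (by positivity)]
  simp [Fin.sum_univ_three, Real.norm_eq_abs, sq_abs]

lemma cross_nsq (v w : F3) : ‖cross v w‖^2 = (v 1 * w 2 - v 2 * w 1)^2 +
    (v 2 * w 0 - v 0 * w 2)^2 + (v 0 * w 1 - v 1 * w 0)^2 := by
  rw [eucl_normsq]
  simp [cross]

lemma norm_cross_le (v w : F3) : ‖cross v w‖ ≤ ‖v‖ * ‖w‖ := by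
  have h1 : ‖cross v w‖^2 ≤ (‖v‖*‖w‖)^2 := by
    rw [cross_nsq, mul_pow, eucl_normsq v, eucl_normsq w]
    nlinarith [sq_nonneg (v 0 * w 0 + v 1 * w 1 + v 2 * w 2)]
  have := Real.sqrt_le_sqrt h1
  rwa [Real.sqrt_sq (norm_nonneg _), Real.sqrt_sq (by positivity)] at this

noncomputable def crossL : F3 →L[ℝ] F3 →L[ℝ] F3 :=
  LinearMap.mkContinuous₂
    (LinearMap.mk₂ ℝ cross
      (fun v v' w => by ext i; fin_cases i <;> simp [cross] <;> ring)
      (fun c v w => by ext i; fin_cases i <;> simp [cross] <;> ring)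
      (fun v w w' => by ext i; fin_cases i <;> simp [cross] <;> ring)
      (fun c v w => by ext i; fin_cases i <;> simp [cross] <;> ring))
    1 (fun v w => by simpa using norm_cross_le v w)

@[simp] lemma crossL_apply (v w : F3) : crossL v w = cross v w := rfl

section
variable {E : Type*} {F : Type*} [NormedAddCommGroup E] [NormedSpace ℝ E]
  [NormedAddCommGroup F] [InnerProductSpace ℝ F]

/-- bound for iterated derivatives of a continuous linear map -/
lemma iter_clm_le (A : E →L[ℝ] F) (m : ℕ) (x : E) {M : ℝ} (h0 : ‖A x‖ ≤ M)
    (h1 : ‖A‖ ≤ M) (hM : 0 ≤ M) : ‖iteratedFDeriv ℝ m (fun y => A y) x‖ ≤ M := by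
  match m with
  | 0 => rwa [norm_iteratedFDeriv_zero]
  | 1 =>
    rw [show (1:ℕ) = 0 + 1 from rfl, ← norm_iteratedFDeriv_fderiv, norm_iteratedFDeriv_zero]
    have : fderiv ℝ (fun y => A y) x = A := A.fderiv
    rw [this]; exact h1
  | (n+2) =>
    rw [show n+2 = (n+1) + 1 from rfl, ← norm_iteratedFDeriv_fderiv]
    have : (fderiv ℝ (fun y => A y)) = fun _ : E => A := by
      funext y; exact A.fderiv
    rw [this, iteratedFDeriv_const_of_ne (Nat.succ_ne_zero n)]
    simpa using hM

lemma norm_innerSL_le' : ‖(innerSL ℝ : F →L[ℝ] F →L[ℝ] ℝ)‖ ≤ 1 := by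
  apply ContinuousLinearMap.opNorm_le_bound _ zero_le_one
  intro x
  rw [innerSL_apply_norm, one_mul]

/-- Leibniz bound for `⟪f,f⟫` given uniform bounds on derivatives of `f`. -/
lemma iter_inner_le {f : E → F} (hf : ContDiff ℝ ∞ f) (n : ℕ) (x : E) {M : ℝ}
    (hM : ∀ m : ℕ, ‖iteratedFDeriv ℝ m f x‖ ≤ M) (hM0 : 0 ≤ M) :
    ‖iteratedFDeriv ℝ n (fun y => (inner ℝ (f y) (f y) : ℝ)) x‖ ≤ 2^n * M^2 := by
  have hn : (n : WithTop ℕ∞) ≤ ∞ := mod_cast le_top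
  have h := (innerSL ℝ : F →L[ℝ] F →L[ℝ] ℝ).norm_iteratedFDeriv_le_of_bilinear hf hf x hn
  refine h.trans ?_
  have hsum : ∑ i ∈ Finset.range (n + 1),
      (n.choose i : ℝ) * ‖iteratedFDeriv ℝ i f x‖ * ‖iteratedFDeriv ℝ (n - i) f x‖
      ≤ 2^n * M^2 := by
    calc ∑ i ∈ Finset.range (n + 1),
        (n.choose i : ℝ) * ‖iteratedFDeriv ℝ i f x‖ * ‖iteratedFDeriv ℝ (n - i) f x‖
        ≤ ∑ i ∈ Finset.range (n + 1), (n.choose i : ℝ) * M * M := by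
          apply Finset.sum_le_sum
          intro i _
          gcongr
          · exact hM i
          · exact hM (n - i)
      _ = 2^n * M^2 := by
          rw [← Finset.sum_mul, ← Finset.sum_mul]
          rw [← Nat.cast_sum, Nat.sum_range_choose]
          push_cast; ring
  calc ‖(innerSL ℝ : F →L[ℝ] F →L[ℝ] ℝ)‖ * ∑ i ∈ Finset.range (n + 1),
      (n.choose i : ℝ) * ‖iteratedFDeriv ℝ i f x‖ * ‖iteratedFDeriv ℝ (n - i) f x‖
      ≤ 1 * (2^n * M^2) := by
        apply mul_le_mul norm_innerSL_le' hsum (Finset.sum_nonneg ?_) zero_le_one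
        intro i _; positivity
    _ = 2^n * M^2 := one_mul _

end

/-- The symbol `a(v,η) = 1 + |v|² + |η|² + |ξ|² + |v∧η|² + |v∧ξ|²`. -/
noncomputable def symbA (ξ : EuclideanSpace ℝ (Fin 3))
    (Y : EuclideanSpace ℝ (Fin 3) × EuclideanSpace ℝ (Fin 3)) : ℝ :=
  1 + ‖Y.1‖ ^ 2 + ‖Y.2‖ ^ 2 + ‖ξ‖ ^ 2 + ‖cross Y.1 Y.2‖ ^ 2 + ‖cross Y.1 ξ‖ ^ 2

noncomputable def A1 : (F3 × F3) →L[ℝ] F3 := ContinuousLinearMap.fst ℝ F3 F3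
noncomputable def A2 : (F3 × F3) →L[ℝ] F3 := ContinuousLinearMap.snd ℝ F3 F3
noncomputable def Axi (ξ : F3) : (F3 × F3) →L[ℝ] F3 := (crossL.flip ξ).comp A1

@[simp] lemma A1_apply (Y : F3 × F3) : A1 Y = Y.1 := rfl
@[simp] lemma A2_apply (Y : F3 × F3) : A2 Y = Y.2 := rfl
@[simp] lemma Axi_apply (ξ : F3) (Y : F3 × F3) : Axi ξ Y = cross Y.1 ξ := rfl

lemma norm_crossL_le : ‖(crossL : F3 →L[ℝ] F3 →L[ℝ] F3)‖ ≤ 1 :=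
  LinearMap.mkContinuous₂_norm_le _ zero_le_one _

lemma norm_A1_le : ‖(A1 : (F3 × F3) →L[ℝ] F3)‖ ≤ 1 :=
  ContinuousLinearMap.opNorm_le_bound _ zero_le_one fun Y => by
    simpa using norm_fst_le Y

lemma norm_A2_le : ‖(A2 : (F3 × F3) →L[ℝ] F3)‖ ≤ 1 :=
  ContinuousLinearMap.opNorm_le_bound _ zero_le_one fun Y => by
    simpa using norm_snd_le Y

lemma norm_Axi_le (ξ : F3) : ‖Axi ξ‖ ≤ ‖ξ‖ :=
  ContinuousLinearMap.opNorm_le_bound _ (norm_nonneg ξ) fun Y => by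
    simp only [Axi_apply]
    calc ‖cross Y.1 ξ‖ ≤ ‖Y.1‖ * ‖ξ‖ := norm_cross_le _ _
      _ ≤ ‖Y‖ * ‖ξ‖ := by gcongr; exact norm_fst_le Y
      _ = ‖ξ‖ * ‖Y‖ := mul_comm _ _

noncomputable def p0 (ξ : F3) : (F3 × F3) → ℝ := fun _ => 1 + ‖ξ‖^2
noncomputable def p1 : (F3 × F3) → ℝ := fun Y => (inner ℝ (A1 Y) (A1 Y) : ℝ)
noncomputable def p2 : (F3 × F3) → ℝ := fun Y => (inner ℝ (A2 Y) (A2 Y) : ℝ)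
noncomputable def p3 : (F3 × F3) → ℝ := fun Y => (inner ℝ (crossL Y.1 Y.2) (crossL Y.1 Y.2) : ℝ)
noncomputable def p4 (ξ : F3) : (F3 × F3) → ℝ := fun Y => (inner ℝ (Axi ξ Y) (Axi ξ Y) : ℝ)

lemma symbA_eq (ξ : F3) : symbA ξ = p0 ξ + p1 + p2 + p3 + p4 ξ := by
  funext Y
  simp only [Pi.add_apply, p0, p1, p2, p3, p4, A1_apply, A2_apply, Axi_apply, crossL_apply,
    real_inner_self_eq_norm_sq, symbA]
  ring

lemma one_le_symbA (ξ : F3) (Y : F3 × F3) : 1 ≤ symbA ξ Y := by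
  have h1 := sq_nonneg ‖Y.1‖; have h2 := sq_nonneg ‖Y.2‖
  have h3 := sq_nonneg ‖ξ‖; have h4 := sq_nonneg ‖cross Y.1 Y.2‖
  have h5 := sq_nonneg ‖cross Y.1 ξ‖
  simp only [symbA]; linarith

lemma symbA_pos (ξ : F3) (Y : F3 × F3) : 0 < symbA ξ Y :=
  lt_of_lt_of_le one_pos (one_le_symbA ξ Y)

lemma le_sqrt_symbA {x : ℝ} (hx : 0 ≤ x) {ξ : F3} {Y : F3 × F3}
    (h : x^2 ≤ symbA ξ Y) : x ≤ Real.sqrt (symbA ξ Y) := by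
  rw [show x = Real.sqrt (x^2) from (Real.sqrt_sq hx).symm]
  exact Real.sqrt_le_sqrt h

lemma one_le_sqrt_symbA (ξ : F3) (Y : F3 × F3) : 1 ≤ Real.sqrt (symbA ξ Y) :=
  le_sqrt_symbA zero_le_one (by simpa using one_le_symbA ξ Y)

lemma fst_le_sqrt (ξ : F3) (Y : F3 × F3) : ‖Y.1‖ ≤ Real.sqrt (symbA ξ Y) := by
  apply le_sqrt_symbA (norm_nonneg _)
  have h2 := sq_nonneg ‖Y.2‖; have h3 := sq_nonneg ‖ξ‖
  have h4 := sq_nonneg ‖cross Y.1 Y.2‖; have h5 := sq_nonneg ‖cross Y.1 ξ‖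
  simp only [symbA]; linarith

lemma snd_le_sqrt (ξ : F3) (Y : F3 × F3) : ‖Y.2‖ ≤ Real.sqrt (symbA ξ Y) := by
  apply le_sqrt_symbA (norm_nonneg _)
  have h2 := sq_nonneg ‖Y.1‖; have h3 := sq_nonneg ‖ξ‖
  have h4 := sq_nonneg ‖cross Y.1 Y.2‖; have h5 := sq_nonneg ‖cross Y.1 ξ‖
  simp only [symbA]; linarith

lemma xi_le_sqrt (ξ : F3) (Y : F3 × F3) : ‖ξ‖ ≤ Real.sqrt (symbA ξ Y) := by
  apply le_sqrt_symbA (norm_nonneg _)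
  have h2 := sq_nonneg ‖Y.1‖; have h3 := sq_nonneg ‖Y.2‖
  have h4 := sq_nonneg ‖cross Y.1 Y.2‖; have h5 := sq_nonneg ‖cross Y.1 ξ‖
  simp only [symbA]; linarith

lemma crossvw_le_sqrt (ξ : F3) (Y : F3 × F3) :
    ‖cross Y.1 Y.2‖ ≤ Real.sqrt (symbA ξ Y) := by
  apply le_sqrt_symbA (norm_nonneg _)
  have h2 := sq_nonneg ‖Y.1‖; have h3 := sq_nonneg ‖Y.2‖
  have h4 := sq_nonneg ‖ξ‖; have h5 := sq_nonneg ‖cross Y.1 ξ‖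
  simp only [symbA]; linarith

lemma crossvxi_le_sqrt (ξ : F3) (Y : F3 × F3) :
    ‖cross Y.1 ξ‖ ≤ Real.sqrt (symbA ξ Y) := by
  apply le_sqrt_symbA (norm_nonneg _)
  have h2 := sq_nonneg ‖Y.1‖; have h3 := sq_nonneg ‖Y.2‖
  have h4 := sq_nonneg ‖ξ‖; have h5 := sq_nonneg ‖cross Y.1 Y.2‖
  simp only [symbA]; linarith

section pieces
variable {E' : Type*} [NormedAddCommGroup E'] [NormedSpace ℝ E']

lemma iter_clm_one (A : E' →L[ℝ] F3) (x : E') :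
    ‖iteratedFDeriv ℝ 1 (fun y => A y) x‖ ≤ ‖A‖ := by
  rw [show (1:ℕ) = 0 + 1 from rfl, ← norm_iteratedFDeriv_fderiv, norm_iteratedFDeriv_zero]
  rw [A.fderiv]

lemma iter_clm_big (A : E' →L[ℝ] F3) (n : ℕ) (x : E') :
    iteratedFDeriv ℝ (n+2) (fun y => A y) x = 0 := by
  have h : ‖iteratedFDeriv ℝ (n+2) (fun y => A y) x‖ = 0 := by
    rw [show n+2 = (n+1) + 1 from rfl, ← norm_iteratedFDeriv_fderiv]
    have : (fderiv ℝ (fun y => A y)) = fun _ : E' => A := by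
      funext y; exact A.fderiv
    rw [this, iteratedFDeriv_const_of_ne (Nat.succ_ne_zero n)]
    simp
  simpa using h

end pieces

lemma iter_clm_big' {E' : Type*} [NormedAddCommGroup E'] [NormedSpace ℝ E']
    (A : E' →L[ℝ] F3) {m : ℕ} (hm : 2 ≤ m) (x : E') :
    iteratedFDeriv ℝ m (fun y => A y) x = 0 := by
  obtain ⟨n, rfl⟩ : ∃ n, m = n + 2 := ⟨m - 2, by omega⟩
  exact iter_clm_big A n x

lemma iter_A1_le (ξ : F3) (Y : F3 × F3) (m : ℕ) :
    ‖iteratedFDeriv ℝ m (fun W => A1 W) Y‖ ≤ Real.sqrt (symbA ξ Y) :=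
  iter_clm_le A1 m Y (by simpa using fst_le_sqrt ξ Y)
    (norm_A1_le.trans (one_le_sqrt_symbA ξ Y)) (Real.sqrt_nonneg _)

lemma iter_A2_le (ξ : F3) (Y : F3 × F3) (m : ℕ) :
    ‖iteratedFDeriv ℝ m (fun W => A2 W) Y‖ ≤ Real.sqrt (symbA ξ Y) :=
  iter_clm_le A2 m Y (by simpa using snd_le_sqrt ξ Y)
    (norm_A2_le.trans (one_le_sqrt_symbA ξ Y)) (Real.sqrt_nonneg _)

lemma iter_Axi_le (ξ : F3) (Y : F3 × F3) (m : ℕ) :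
    ‖iteratedFDeriv ℝ m (fun W => Axi ξ W) Y‖ ≤ Real.sqrt (symbA ξ Y) :=
  iter_clm_le (Axi ξ) m Y (by simpa using crossvxi_le_sqrt ξ Y)
    ((norm_Axi_le ξ).trans (xi_le_sqrt ξ Y)) (Real.sqrt_nonneg _)

lemma contDiff_q : ContDiff ℝ ∞ (fun W : F3 × F3 => crossL W.1 W.2) :=
  crossL.isBoundedBilinearMap.contDiff

lemma iter_q_le (ξ : F3) (Y : F3 × F3) (m : ℕ) :
    ‖iteratedFDeriv ℝ m (fun W : F3 × F3 => crossL W.1 W.2) Y‖ ≤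
      2 * Real.sqrt (symbA ξ Y) := by
  have hr1 := one_le_sqrt_symbA ξ Y
  match m with
  | 0 =>
    rw [norm_iteratedFDeriv_zero]
    simp only [crossL_apply]
    have := crossvw_le_sqrt ξ Y
    linarith
  | (m+1) =>
    have hn : ((m+1 : ℕ) : WithTop ℕ∞) ≤ ∞ := mod_cast le_top
    have h := crossL.norm_iteratedFDeriv_le_of_bilinear
      (f := fun W : F3 × F3 => A1 W) (g := fun W : F3 × F3 => A2 W)
      A1.contDiff A2.contDiff Y hn
    simp only [A1_apply, A2_apply] at h
    refine h.trans ?_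
    have hsum : ∑ i ∈ Finset.range (m + 1 + 1),
        ((m+1).choose i : ℝ) * ‖iteratedFDeriv ℝ i (fun W : F3 × F3 => A1 W) Y‖ *
          ‖iteratedFDeriv ℝ (m + 1 - i) (fun W : F3 × F3 => A2 W) Y‖ ≤
        2 * Real.sqrt (symbA ξ Y) := by
      match m with
      | 0 =>
        rw [Finset.sum_range_succ, Finset.sum_range_one]
        simp only [Nat.choose_self, Nat.choose_zero_right, Nat.cast_one, one_mul,
          Nat.sub_zero, Nat.sub_self]
        rw [norm_iteratedFDeriv_zero, norm_iteratedFDeriv_zero]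
        have b1 : ‖iteratedFDeriv ℝ 1 (fun W : F3 × F3 => A2 W) Y‖ ≤ 1 :=
          (iter_clm_one A2 Y).trans norm_A2_le
        have b2 : ‖iteratedFDeriv ℝ 1 (fun W : F3 × F3 => A1 W) Y‖ ≤ 1 :=
          (iter_clm_one A1 Y).trans norm_A1_le
        have c1 : ‖A1 Y‖ ≤ Real.sqrt (symbA ξ Y) := by simpa using fst_le_sqrt ξ Y
        have c2 : ‖A2 Y‖ ≤ Real.sqrt (symbA ξ Y) := by simpa using snd_le_sqrt ξ Y
        have d1 : ‖A1 Y‖ * ‖iteratedFDeriv ℝ 1 (fun W : F3 × F3 => A2 W) Y‖ ≤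
            Real.sqrt (symbA ξ Y) * 1 := by
          apply mul_le_mul c1 b1 (norm_nonneg _) (Real.sqrt_nonneg _)
        have d2 : ‖iteratedFDeriv ℝ 1 (fun W : F3 × F3 => A1 W) Y‖ * ‖A2 Y‖ ≤
            1 * Real.sqrt (symbA ξ Y) := by
          apply mul_le_mul b2 c2 (norm_nonneg _) zero_le_one
        linarith
      | 1 =>
        rw [Finset.sum_range_succ, Finset.sum_range_succ, Finset.sum_range_one,
          iter_clm_big' A2 (m := 1 + 1 - 0) (by norm_num) Y,
          iter_clm_big' A1 (m := 1 + 1) (by norm_num) Y]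
        simp only [norm_zero, mul_zero, zero_mul, add_zero, zero_add]
        have b1 : ‖iteratedFDeriv ℝ 1 (fun W : F3 × F3 => A1 W) Y‖ ≤ 1 :=
          (iter_clm_one A1 Y).trans norm_A1_le
        have b2 : ‖iteratedFDeriv ℝ (1 + 1 - 1) (fun W : F3 × F3 => A2 W) Y‖ ≤ 1 :=
          (iter_clm_one A2 Y).trans norm_A2_le
        have hc : (((1+1 : ℕ)).choose 1 : ℝ) = 2 := by norm_num
        rw [hc]
        nlinarith [norm_nonneg (iteratedFDeriv ℝ 1 (fun W : F3 × F3 => A1 W) Y),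
          norm_nonneg (iteratedFDeriv ℝ (1 + 1 - 1) (fun W : F3 × F3 => A2 W) Y)]
      | (m+2) =>
        have hz : ∀ i ∈ Finset.range (m + 3 + 1),
            ((m+3).choose i : ℝ) * ‖iteratedFDeriv ℝ i (fun W : F3 × F3 => A1 W) Y‖ *
              ‖iteratedFDeriv ℝ (m + 3 - i) (fun W : F3 × F3 => A2 W) Y‖ = 0 := by
          intro i _
          by_cases h : i ≤ 1
          · rw [iter_clm_big' A2 (m := m + 3 - i) (by omega) Y]
            simp
          · rw [iter_clm_big' A1 (m := i) (by omega) Y]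
            simp
        rw [show m + 2 + 1 = m + 3 from rfl, Finset.sum_eq_zero hz]
        positivity
    calc ‖(crossL : F3 →L[ℝ] F3 →L[ℝ] F3)‖ * ∑ i ∈ Finset.range (m + 1 + 1),
        ((m+1).choose i : ℝ) * ‖iteratedFDeriv ℝ i (fun W : F3 × F3 => A1 W) Y‖ *
          ‖iteratedFDeriv ℝ (m + 1 - i) (fun W : F3 × F3 => A2 W) Y‖
        ≤ 1 * (2 * Real.sqrt (symbA ξ Y)) := by
          apply mul_le_mul norm_crossL_le hsum (Finset.sum_nonneg ?_) zero_le_one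
          intro i _; positivity
      _ = 2 * Real.sqrt (symbA ξ Y) := one_mul _


lemma contDiff_p0 (ξ : F3) : ContDiff ℝ ∞ (p0 ξ) := contDiff_const
lemma contDiff_p1 : ContDiff ℝ ∞ p1 := A1.contDiff.inner ℝ A1.contDiff
lemma contDiff_p2 : ContDiff ℝ ∞ p2 := A2.contDiff.inner ℝ A2.contDiff
lemma contDiff_p3 : ContDiff ℝ ∞ p3 := contDiff_q.inner ℝ contDiff_q
lemma contDiff_p4 (ξ : F3) : ContDiff ℝ ∞ (p4 ξ) := (Axi ξ).contDiff.inner ℝ (Axi ξ).contDiff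

lemma symbA_contDiff (ξ : F3) : ContDiff ℝ ∞ (symbA ξ) := by
  rw [symbA_eq ξ]
  exact ((((contDiff_p0 ξ).add contDiff_p1).add contDiff_p2).add contDiff_p3).add (contDiff_p4 ξ)

lemma const_piece_le (ξ : F3) (Y : F3 × F3) (n : ℕ) :
    ‖iteratedFDeriv ℝ n (p0 ξ) Y‖ ≤ symbA ξ Y := by
  have h1 := sq_nonneg ‖Y.1‖; have h2 := sq_nonneg ‖Y.2‖
  have h3 := sq_nonneg ‖ξ‖; have h4 := sq_nonneg ‖cross Y.1 Y.2‖
  have h5 := sq_nonneg ‖cross Y.1 ξ‖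
  match n with
  | 0 =>
    rw [norm_iteratedFDeriv_zero]
    have : ‖p0 ξ Y‖ = 1 + ‖ξ‖^2 := by
      rw [show p0 ξ Y = 1 + ‖ξ‖^2 from rfl, Real.norm_eq_abs, abs_of_nonneg (by positivity)]
    rw [this]
    simp only [symbA]; linarith
  | (n+1) =>
    rw [show p0 ξ = fun _ : F3 × F3 => (1:ℝ) + ‖ξ‖^2 from rfl,
      iteratedFDeriv_const_of_ne (Nat.succ_ne_zero n)]
    simp only [Pi.zero_apply, norm_zero, symbA]
    linarith

lemma inner_piece_le {f : (F3 × F3) → F3} (hf : ContDiff ℝ ∞ f) (ξ : F3) (Y : F3 × F3)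
    (n : ℕ) (hM : ∀ m : ℕ, ‖iteratedFDeriv ℝ m f Y‖ ≤ 2 * Real.sqrt (symbA ξ Y)) :
    ‖iteratedFDeriv ℝ n (fun y => (inner ℝ (f y) (f y) : ℝ)) Y‖ ≤ 2^n * 4 * symbA ξ Y := by
  have h := iter_inner_le hf n Y hM (by positivity)
  refine h.trans (le_of_eq ?_)
  have : (2 * Real.sqrt (symbA ξ Y))^2 = 4 * symbA ξ Y := by
    rw [mul_pow, Real.sq_sqrt (symbA_pos ξ Y).le]; ring
  rw [this]; ring

lemma symbA_iter_le (ξ : F3) (Y : F3 × F3) (n : ℕ) :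
    ‖iteratedFDeriv ℝ n (symbA ξ) Y‖ ≤ (1 + 2^n * 16) * symbA ξ Y := by
  have hs := symbA_pos ξ Y
  have hsqrt := Real.sqrt_nonneg (symbA ξ Y)
  have hn' : ((n : ℕ) : WithTop ℕ∞) ≤ ∞ := mod_cast le_top
  have e1 : ∀ m : ℕ, ‖iteratedFDeriv ℝ m (fun W => A1 W) Y‖ ≤ 2 * Real.sqrt (symbA ξ Y) :=
    fun m => (iter_A1_le ξ Y m).trans (by linarith)
  have e2 : ∀ m : ℕ, ‖iteratedFDeriv ℝ m (fun W => A2 W) Y‖ ≤ 2 * Real.sqrt (symbA ξ Y) :=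
    fun m => (iter_A2_le ξ Y m).trans (by linarith)
  have e3 := iter_q_le ξ Y
  have e4 : ∀ m : ℕ, ‖iteratedFDeriv ℝ m (fun W => Axi ξ W) Y‖ ≤ 2 * Real.sqrt (symbA ξ Y) :=
    fun m => (iter_Axi_le ξ Y m).trans (by linarith)
  have b0 := const_piece_le ξ Y n
  have b1 : ‖iteratedFDeriv ℝ n p1 Y‖ ≤ 2^n * 4 * symbA ξ Y :=
    inner_piece_le A1.contDiff ξ Y n e1
  have b2 : ‖iteratedFDeriv ℝ n p2 Y‖ ≤ 2^n * 4 * symbA ξ Y :=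
    inner_piece_le A2.contDiff ξ Y n e2
  have b3 : ‖iteratedFDeriv ℝ n p3 Y‖ ≤ 2^n * 4 * symbA ξ Y :=
    inner_piece_le contDiff_q ξ Y n e3
  have b4 : ‖iteratedFDeriv ℝ n (p4 ξ) Y‖ ≤ 2^n * 4 * symbA ξ Y :=
    inner_piece_le (Axi ξ).contDiff ξ Y n e4
  have h0123 : ContDiff ℝ (n : ℕ) (p0 ξ + p1 + p2 + p3) :=
    ((((contDiff_p0 ξ).add contDiff_p1).add contDiff_p2).add contDiff_p3).of_le hn'
  have h012 : ContDiff ℝ (n : ℕ) (p0 ξ + p1 + p2) :=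
    (((contDiff_p0 ξ).add contDiff_p1).add contDiff_p2).of_le hn'
  have h01 : ContDiff ℝ (n : ℕ) (p0 ξ + p1) :=
    ((contDiff_p0 ξ).add contDiff_p1).of_le hn'
  have key : iteratedFDeriv ℝ n (symbA ξ) Y =
      iteratedFDeriv ℝ n (p0 ξ) Y + iteratedFDeriv ℝ n p1 Y + iteratedFDeriv ℝ n p2 Y +
        iteratedFDeriv ℝ n p3 Y + iteratedFDeriv ℝ n (p4 ξ) Y := by
    rw [symbA_eq ξ,
      iteratedFDeriv_add_apply h0123.contDiffAt ((contDiff_p4 ξ).of_le hn').contDiffAt,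
      iteratedFDeriv_add_apply h012.contDiffAt (contDiff_p3.of_le hn').contDiffAt,
      iteratedFDeriv_add_apply h01.contDiffAt (contDiff_p2.of_le hn').contDiffAt,
      iteratedFDeriv_add_apply ((contDiff_p0 ξ).of_le hn').contDiffAt (contDiff_p1.of_le hn').contDiffAt]
  rw [key]
  have tri : ‖iteratedFDeriv ℝ n (p0 ξ) Y + iteratedFDeriv ℝ n p1 Y + iteratedFDeriv ℝ n p2 Y +
      iteratedFDeriv ℝ n p3 Y + iteratedFDeriv ℝ n (p4 ξ) Y‖ ≤
      ‖iteratedFDeriv ℝ n (p0 ξ) Y‖ + ‖iteratedFDeriv ℝ n p1 Y‖ + ‖iteratedFDeriv ℝ n p2 Y‖ +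
      ‖iteratedFDeriv ℝ n p3 Y‖ + ‖iteratedFDeriv ℝ n (p4 ξ) Y‖ := by
    refine (norm_add_le _ _).trans ?_
    gcongr
    refine (norm_add_le _ _).trans ?_
    gcongr
    refine (norm_add_le _ _).trans ?_
    gcongr
    exact norm_add_le _ _
  refine tri.trans ?_
  have hp : (0:ℝ) < 2^n := by positivity
  nlinarith [b0, b1, b2, b3, b4]

lemma contDiff_rpowA (ξ : F3) (k : ℝ) : ContDiff ℝ ∞ (fun W => symbA ξ W ^ k) := by
  rw [contDiff_iff_contDiffAt]
  intro W
  exact (symbA_contDiff ξ).contDiffAt.rpow_const_of_ne (symbA_pos ξ W).ne'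

lemma fderiv_rpowA (ξ : F3) (k : ℝ) (Y : F3 × F3) :
    fderiv ℝ (fun W => symbA ξ W ^ k) Y =
      (k * symbA ξ Y ^ (k-1)) • fderiv ℝ (symbA ξ) Y := by
  have hd : HasFDerivAt (symbA ξ) (fderiv ℝ (symbA ξ) Y) Y :=
    (((symbA_contDiff ξ).differentiable (by simp)) Y).hasFDerivAt
  exact (hd.rpow_const (Or.inl (symbA_pos ξ Y).ne')).fderiv

lemma symbA_aux : ∀ j : ℕ, ∀ k : ℝ,
    ∃ C > 0, ∀ (ξ : F3) (Y : F3 × F3),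
      ‖iteratedFDeriv ℝ j (fun W => symbA ξ W ^ k) Y‖ ≤ C * symbA ξ Y ^ k := by
  intro j
  induction j using Nat.strong_induction_on with
  | _ j IH =>
    match j with
    | 0 =>
      intro k
      refine ⟨1, one_pos, fun ξ Y => ?_⟩
      rw [norm_iteratedFDeriv_zero, Real.norm_eq_abs,
        abs_of_nonneg (Real.rpow_nonneg (symbA_pos ξ Y).le k), one_mul]
    | (j+1) =>
      intro k
      have H : ∀ i : ℕ, ∃ C, 0 < C ∧ (i < j + 1 → ∀ (ξ : F3) (Y : F3 × F3),
          ‖iteratedFDeriv ℝ i (fun W => symbA ξ W ^ (k-1)) Y‖ ≤ C * symbA ξ Y ^ (k-1)) := by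
        intro i
        by_cases h : i < j + 1
        · obtain ⟨C, hC, hb⟩ := IH i h (k-1)
          exact ⟨C, hC, fun _ => hb⟩
        · exact ⟨1, one_pos, fun h' => absurd h' h⟩
      choose Cf hCf hCb using H
      set S : ℝ := 1 + 2^(j+1) * 16 with hSdef
      have hSpos : 0 < S := by positivity
      set Ctot : ℝ :=
        (∑ i ∈ Finset.range (j+1), (j.choose i : ℝ) * (|k| * Cf i) * S) + 1 with hCtot
      have hsum_nonneg : 0 ≤ ∑ i ∈ Finset.range (j+1), (j.choose i : ℝ) * (|k| * Cf i) * S := by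
        apply Finset.sum_nonneg
        intro i _
        have := (hCf i).le
        positivity
      refine ⟨Ctot, by linarith, fun ξ Y => ?_⟩
      have hs := symbA_pos ξ Y
      have hak : symbA ξ Y ^ (k-1) * symbA ξ Y = symbA ξ Y ^ k := by
        rw [← Real.rpow_add_one hs.ne' (k-1), sub_add_cancel]
      have hakpos : 0 < symbA ξ Y ^ k := Real.rpow_pos_of_pos hs k
      have hak1pos : 0 < symbA ξ Y ^ (k-1) := Real.rpow_pos_of_pos hs (k-1)
      have hj : ((j : ℕ) : WithTop ℕ∞) ≤ ∞ := mod_cast le_top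
      have hf : ContDiff ℝ ∞ (fun W => k * symbA ξ W ^ (k-1)) :=
        contDiff_const.mul (contDiff_rpowA ξ (k-1))
      have hg : ContDiff ℝ ∞ (fderiv ℝ (symbA ξ)) :=
        (symbA_contDiff ξ).fderiv_right (by simp)
      rw [← norm_iteratedFDeriv_fderiv]
      have hfd : (fderiv ℝ (fun W => symbA ξ W ^ k)) =
          fun W => (k * symbA ξ W ^ (k-1)) • fderiv ℝ (symbA ξ) W :=
        funext (fderiv_rpowA ξ k)
      rw [hfd]
      refine (norm_iteratedFDeriv_smul_le hf hg Y hj).trans ?_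
      have hterm : ∀ i ∈ Finset.range (j+1),
          (j.choose i : ℝ) * ‖iteratedFDeriv ℝ i (fun W => k * symbA ξ W ^ (k-1)) Y‖ *
            ‖iteratedFDeriv ℝ (j - i) (fderiv ℝ (symbA ξ)) Y‖ ≤
          ((j.choose i : ℝ) * (|k| * Cf i) * S) * symbA ξ Y ^ k := by
        intro i hi
        have hilt : i < j + 1 := Finset.mem_range.mp hi
        have hfi : ContDiff ℝ (i : ℕ) (fun W => symbA ξ W ^ (k-1)) :=
          (contDiff_rpowA ξ (k-1)).of_le (mod_cast le_top)
        have hsmul : iteratedFDeriv ℝ i (fun W => k * symbA ξ W ^ (k-1)) Y =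
            k • iteratedFDeriv ℝ i (fun W => symbA ξ W ^ (k-1)) Y := by
          have h := iteratedFDeriv_const_smul_apply' (a := k) hfi.contDiffAt (x := Y)
          simpa [smul_eq_mul] using h
        have t1 : ‖iteratedFDeriv ℝ i (fun W => k * symbA ξ W ^ (k-1)) Y‖ ≤
            |k| * Cf i * symbA ξ Y ^ (k-1) := by
          rw [hsmul, norm_smul k (iteratedFDeriv ℝ i (fun W => symbA ξ W ^ (k-1)) Y),
            Real.norm_eq_abs, mul_assoc]
          have := hCb i hilt ξ Y
          have habs : (0:ℝ) ≤ |k| := abs_nonneg k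
          exact mul_le_mul_of_nonneg_left this habs
        have t2 : ‖iteratedFDeriv ℝ (j - i) (fderiv ℝ (symbA ξ)) Y‖ ≤ S * symbA ξ Y := by
          rw [norm_iteratedFDeriv_fderiv]
          refine (symbA_iter_le ξ Y (j - i + 1)).trans ?_
          have hpow : (2:ℝ)^(j - i + 1) ≤ 2^(j+1) := by
            apply pow_le_pow_right₀ one_le_two
            omega
          have : (1 + (2:ℝ)^(j-i+1) * 16) ≤ S := by
            rw [hSdef]; nlinarith
          exact mul_le_mul_of_nonneg_right this hs.le
        calc (j.choose i : ℝ) * ‖iteratedFDeriv ℝ i (fun W => k * symbA ξ W ^ (k-1)) Y‖ *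
              ‖iteratedFDeriv ℝ (j - i) (fderiv ℝ (symbA ξ)) Y‖
            ≤ (j.choose i : ℝ) * (|k| * Cf i * symbA ξ Y ^ (k-1)) * (S * symbA ξ Y) := by
              apply mul_le_mul (mul_le_mul_of_nonneg_left t1 (Nat.cast_nonneg _)) t2
                (norm_nonneg _)
                (mul_nonneg (Nat.cast_nonneg _) (mul_nonneg (mul_nonneg (abs_nonneg k)
                  (hCf i).le) hak1pos.le))
          _ = ((j.choose i : ℝ) * (|k| * Cf i) * S) * (symbA ξ Y ^ (k-1) * symbA ξ Y) := by
              ring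
          _ = ((j.choose i : ℝ) * (|k| * Cf i) * S) * symbA ξ Y ^ k := by rw [hak]
      calc ∑ i ∈ Finset.range (j+1),
            (j.choose i : ℝ) * ‖iteratedFDeriv ℝ i (fun W => k * symbA ξ W ^ (k-1)) Y‖ *
              ‖iteratedFDeriv ℝ (j - i) (fderiv ℝ (symbA ξ)) Y‖
          ≤ ∑ i ∈ Finset.range (j+1), ((j.choose i : ℝ) * (|k| * Cf i) * S) * symbA ξ Y ^ k :=
            Finset.sum_le_sum hterm
        _ = (∑ i ∈ Finset.range (j+1), (j.choose i : ℝ) * (|k| * Cf i) * S) * symbA ξ Y ^ k := by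
            rw [Finset.sum_mul]
        _ ≤ Ctot * symbA ξ Y ^ k := by
            apply mul_le_mul_of_nonneg_right _ hakpos.le
            rw [hCtot]; linarith

/-- All derivatives of `a^k` are bounded by constants times `a^k`, uniformly in `ξ`. -/
theorem symbA_power_derivatives (k : ℝ) (j : ℕ) :
    ∃ C > 0, ∀ ξ : EuclideanSpace ℝ (Fin 3),
      ∀ Y : EuclideanSpace ℝ (Fin 3) × EuclideanSpace ℝ (Fin 3),
        ‖iteratedFDeriv ℝ j (fun W => symbA ξ W ^ k) Y‖ ≤ C * symbA ξ Y ^ k := by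
  exact symbA_aux j k
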